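/- Let α, β ∈ (0,1). Then for all integers k ≥ 1, the sum ∑_{i=1}^{k} (k−(i−1))^(β−1) · i^(α−1) is at most (Γ(α)Γ(β)/Γ(α+β)) · k^(α+β−1). -/

import Mathlib

open MeasureTheory Set intervalIntegral

/-- Integrability of the Beta integrand. -/
lemma beta_integrable {α β : ℝ} (hα : 0 < α) (hβ : 0 < β) :
    IntervalIntegrable (fun t : ℝ => t ^ (α - 1) * (1 - t) ^ (β - 1)) volume 0 1 := by
  have left : IntervalIntegrable (fun t : ℝ => t ^ (α - 1) * (1 - t) ^ (β - 1))
      volume 0 (1/2) := by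
    refine (intervalIntegral.intervalIntegrable_rpow' (by linarith)).mul_continuousOn ?_
    refine ContinuousOn.rpow_const (by fun_prop) ?_
    intro t ht
    rw [Set.uIcc_of_le (by norm_num)] at ht
    left; nlinarith [ht.2]
  have right : IntervalIntegrable (fun t : ℝ => t ^ (α - 1) * (1 - t) ^ (β - 1))
      volume (1/2) 1 := by
    have h2 : IntervalIntegrable (fun t : ℝ => (1 - t) ^ (β - 1)) volume (1/2) 1 := by
      have := (intervalIntegral.intervalIntegrable_rpow' (r := β - 1) (by linarith)
        (a := 0) (b := 1/2)).comp_sub_left 1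
      norm_num at this
      exact this.symm
    refine h2.continuousOn_mul ?_
    refine ContinuousOn.rpow_const (by fun_prop) ?_
    intro t ht
    rw [Set.uIcc_of_le (by norm_num)] at ht
    left; nlinarith [ht.1]
  exact left.trans right

/-- The real Beta integral. -/
lemma real_beta {α β : ℝ} (hα : 0 < α) (hβ : 0 < β) :
    ∫ t in (0:ℝ)..1, t ^ (α - 1) * (1 - t) ^ (β - 1)
      = Real.Gamma α * Real.Gamma β / Real.Gamma (α + β) := by
  have h := Complex.Gamma_mul_Gamma_eq_betaIntegral (s := (α:ℂ)) (t := (β:ℂ))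
    (by simpa using hα) (by simpa using hβ)
  have hB : Complex.betaIntegral α β
      = ((∫ t in (0:ℝ)..1, t ^ (α - 1) * (1 - t) ^ (β - 1) : ℝ) : ℂ) := by
    rw [Complex.betaIntegral, ← intervalIntegral.integral_ofReal]
    refine intervalIntegral.integral_congr fun x hx => ?_
    rw [Set.uIcc_of_le (by norm_num)] at hx
    rw [show ((1:ℂ) - (x:ℂ)) = ((1 - x : ℝ) : ℂ) by push_cast; ring,
      show ((α:ℂ) - 1) = ((α - 1 : ℝ) : ℂ) by push_cast; ring,
      show ((β:ℂ) - 1) = ((β - 1 : ℝ) : ℂ) by push_cast; ring,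
      ← Complex.ofReal_cpow hx.1,
      ← Complex.ofReal_cpow (by linarith [hx.2] : (0:ℝ) ≤ 1 - x)]
    push_cast
    ring
  rw [hB, ← Complex.ofReal_add, Complex.Gamma_ofReal, Complex.Gamma_ofReal,
    Complex.Gamma_ofReal, ← Complex.ofReal_mul, ← Complex.ofReal_mul] at h
  have h' := Complex.ofReal_inj.mp h
  have hG : Real.Gamma (α + β) ≠ 0 := (Real.Gamma_pos_of_pos (by linarith)).ne'
  rw [eq_div_iff hG]
  linarith [h']

/-- Discrete Beta comparison: for `α, β ∈ (0,1)` and `k ≥ 1`,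
`∑_{i=1}^k (k-(i-1))^(β-1) i^(α-1) ≤ (Γ(α)Γ(β)/Γ(α+β)) k^(α+β-1)`. -/
theorem stmt_2 (α β : ℝ) (hα : α ∈ Set.Ioo (0 : ℝ) 1) (hβ : β ∈ Set.Ioo (0 : ℝ) 1)
    (k : ℕ) (hk : 1 ≤ k) :
    ∑ i ∈ Finset.Icc 1 k, ((k : ℝ) - ((i : ℝ) - 1)) ^ (β - 1) * (i : ℝ) ^ (α - 1) ≤
      Real.Gamma α * Real.Gamma β / Real.Gamma (α + β) * (k : ℝ) ^ (α + β - 1) := by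
  obtain ⟨hα0, hα1⟩ := hα
  obtain ⟨hβ0, hβ1⟩ := hβ
  have hK : (0 : ℝ) < (k : ℝ) := by positivity
  set K : ℝ := (k : ℝ) with hKdef
  set g : ℝ → ℝ := fun t => t ^ (α - 1) * (1 - t) ^ (β - 1) with hg
  set a : ℕ → ℝ := fun i => (i : ℝ) / K with ha
  -- integrability on subintervals
  have hsub : ∀ i : ℕ, i ≤ k → ∀ j : ℕ, j ≤ k → IntervalIntegrable g volume (a i) (a j) := by
    intro i hi j hj
    refine (beta_integrable hα0 hβ0).mono_set ?_
    have hmem : ∀ m : ℕ, m ≤ k → a m ∈ Set.uIcc (0:ℝ) 1 := by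
      intro m hm
      rw [Set.uIcc_of_le zero_le_one]
      exact ⟨by positivity, by rw [div_le_one hK, hKdef]; exact_mod_cast hm⟩
    exact Set.uIcc_subset_uIcc (hmem i hi) (hmem j hj)
  have hsum : ∑ i ∈ Finset.range k, ∫ t in a i..a (i + 1), g t = ∫ t in (0:ℝ)..1, g t := by
    rw [intervalIntegral.sum_integral_adjacent_intervals
      (fun i hi => hsub i hi.le (i + 1) hi)]
    have h0 : a 0 = 0 := by simp [ha]
    have h1 : a k = 1 := by
      simp only [ha]; field_simp
      exact hKdef.symm
    rw [h0, h1]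
  -- per-interval lower bound
  have key : ∀ i : ℕ, i < k →
      (1 / K) * ((((i : ℝ) + 1) / K) ^ (α - 1) * ((K - i) / K) ^ (β - 1))
        ≤ ∫ t in a i..a (i + 1), g t := by
    intro i hi
    have hiK : (i : ℝ) + 1 ≤ K := by rw [hKdef]; exact_mod_cast Nat.succ_le_of_lt hi
    have hab : a i ≤ a (i + 1) := by
      simp only [ha]
      refine (div_le_div_iff_of_pos_right hK).mpr ?_
      push_cast; linarith
    set c : ℝ := (((i : ℝ) + 1) / K) ^ (α - 1) * ((K - i) / K) ^ (β - 1) with hc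
    have hpt : ∀ t ∈ Set.Ioo (a i) (a (i + 1)), c ≤ g t := by
      intro t ht
      obtain ⟨ht1, ht2⟩ := ht
      have hai : (0 : ℝ) ≤ a i := by positivity
      have ht0 : 0 < t := lt_of_le_of_lt hai ht1
      have hta : t ≤ ((i : ℝ) + 1) / K := by
        simpa [ha] using ht2.le
      have h1t : 0 < 1 - t := by
        have : t < ((i : ℝ) + 1) / K := by simpa [ha] using ht2
        have h2 : ((i : ℝ) + 1) / K ≤ 1 := by rw [div_le_one hK]; exact hiK
        linarith
      have h1tb : 1 - t ≤ (K - i) / K := by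
        have : (i : ℝ) / K ≤ t := by simpa [ha] using ht1.le
        rw [sub_div, div_self hK.ne']
        linarith
      have hA : (((i : ℝ) + 1) / K) ^ (α - 1) ≤ t ^ (α - 1) :=
        Real.rpow_le_rpow_of_nonpos ht0 hta (by linarith)
      have hB : ((K - i) / K) ^ (β - 1) ≤ (1 - t) ^ (β - 1) :=
        Real.rpow_le_rpow_of_nonpos h1t h1tb (by linarith)
      have hBnn : (0 : ℝ) ≤ ((K - i) / K) ^ (β - 1) :=
        Real.rpow_nonneg (div_nonneg (by linarith) hK.le) _
      have htnn : (0 : ℝ) ≤ t ^ (α - 1) := by positivity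
      exact mul_le_mul hA hB hBnn htnn
    have hae : (fun _ : ℝ => c) ≤ᵐ[volume.restrict (Set.Icc (a i) (a (i + 1)))] g := by
      rw [← Measure.restrict_congr_set Ioo_ae_eq_Icc]
      exact (ae_restrict_iff' measurableSet_Ioo).2 (ae_of_all _ hpt)
    have hmono := intervalIntegral.integral_mono_ae_restrict hab
      (_root_.intervalIntegrable_const (c := c)) (hsub i hi.le (i + 1) hi) hae
    have hconst : (∫ _ in a i..a (i + 1), c) = (1 / K) * c := by
      rw [intervalIntegral.integral_const, smul_eq_mul]
      congr 1
      simp only [ha]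
      push_cast
      field_simp
      ring
    calc (1 / K) * c = ∫ _ in a i..a (i + 1), c := hconst.symm
      _ ≤ _ := hmono
  -- rewrite the sum over Icc as a sum over range
  rw [← Finset.Ico_add_one_right_eq_Icc, Finset.sum_Ico_eq_sum_range]
  simp only [Nat.add_sub_cancel]
  have hGnn : (0 : ℝ) ≤ Real.Gamma α * Real.Gamma β / Real.Gamma (α + β) := by
    have := Real.Gamma_pos_of_pos hα0
    have := Real.Gamma_pos_of_pos hβ0
    have := Real.Gamma_pos_of_pos (show (0:ℝ) < α + β by linarith)
    positivity
  have hterm : ∀ i : ℕ, i < k →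
      (K - (((1 + i : ℕ) : ℝ) - 1)) ^ (β - 1) * (((1 + i : ℕ) : ℝ)) ^ (α - 1)
        = K ^ (α + β - 1) *
          ((1 / K) * ((((i : ℝ) + 1) / K) ^ (α - 1) * ((K - i) / K) ^ (β - 1))) := by
    intro i hi
    have hiK : (i : ℝ) + 1 ≤ K := by rw [hKdef]; exact_mod_cast Nat.succ_le_of_lt hi
    push_cast
    have hd1 : (((i : ℝ) + 1) / K) ^ (α - 1) = ((i : ℝ) + 1) ^ (α - 1) / K ^ (α - 1) :=
      Real.div_rpow (by positivity) hK.le _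
    have hd2 : ((K - i) / K) ^ (β - 1) = (K - i) ^ (β - 1) / K ^ (β - 1) :=
      Real.div_rpow (by linarith) hK.le _
    have hKsplit : K ^ (α + β - 1) = K ^ (α - 1) * K ^ (β - 1) * K := by
      rw [← Real.rpow_add hK, ← Real.rpow_add_one hK.ne']
      ring_nf
    rw [hd1, hd2, hKsplit]
    have hKa : K ^ (α - 1) ≠ 0 := by positivity
    have hKb : K ^ (β - 1) ≠ 0 := by positivity
    field_simp
    ring
  calc ∑ i ∈ Finset.range k,
        (K - (((1 + i : ℕ) : ℝ) - 1)) ^ (β - 1) * (((1 + i : ℕ) : ℝ)) ^ (α - 1)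
      = ∑ i ∈ Finset.range k, K ^ (α + β - 1) *
          ((1 / K) * ((((i : ℝ) + 1) / K) ^ (α - 1) * ((K - i) / K) ^ (β - 1))) :=
        Finset.sum_congr rfl fun i hi => hterm i (Finset.mem_range.mp hi)
    _ = K ^ (α + β - 1) * ∑ i ∈ Finset.range k,
          ((1 / K) * ((((i : ℝ) + 1) / K) ^ (α - 1) * ((K - i) / K) ^ (β - 1))) := by
        rw [Finset.mul_sum]
    _ ≤ K ^ (α + β - 1) * ∑ i ∈ Finset.range k, ∫ t in a i..a (i + 1), g t := by
        refine mul_le_mul_of_nonneg_left ?_ (by positivity)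
        exact Finset.sum_le_sum fun i hi => key i (Finset.mem_range.mp hi)
    _ = K ^ (α + β - 1) * (Real.Gamma α * Real.Gamma β / Real.Gamma (α + β)) := by
        rw [hsum, hg]
        rw [real_beta hα0 hβ0]
    _ = Real.Gamma α * Real.Gamma β / Real.Gamma (α + β) * K ^ (α + β - 1) := by ring
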